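/- arXiv:2604.02889 — 2 statements merged into one kernel-verified Lean document; each statement's English description precedes it below -/
import Mathlib

section
/- Let d ≥ 1 and let A : ℝ → Matrix (Fin d) (Fin d) ℝ be differentiable on [0,1) with A(0) = I and A(t) invertible for every t ∈ [0,1). Define F(t) := A'(t) · A(t)⁻¹ and assume F is continuous on [0,1). Fix x₀ ∈ ℝᵈ. If m : ℝ → ℝᵈ satisfies m'(t) = F(t) ·ᵥ m(t) for all t ∈ [0,1) with m(0) = x₀, then m(t) = A(t) ·ᵥ x₀ for all t ∈ [0,1). -/
open Matrix Set

/-- The solution of the linear mean ODE `m' = F m` with `F = A' A⁻¹`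
and `m 0 = x₀` is `m t = A t ·ᵥ x₀` on `[0,1)`. -/
theorem mean_matching
    (d : ℕ) (hd : 1 ≤ d)
    (A A' : ℝ → Matrix (Fin d) (Fin d) ℝ)
    (hA : ∀ t ∈ Ico (0:ℝ) 1, ∀ i j,
      HasDerivWithinAt (fun s => A s i j) (A' t i j) (Ico (0:ℝ) 1) t)
    (hA0 : A 0 = 1)
    (hAinv : ∀ t ∈ Ico (0:ℝ) 1, IsUnit (A t))
    (hFcont : ContinuousOn (fun t => A' t * (A t)⁻¹) (Ico (0:ℝ) 1))
    (x₀ : Fin d → ℝ) (m : ℝ → Fin d → ℝ)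
    (hm : ∀ t ∈ Ico (0:ℝ) 1,
      HasDerivWithinAt m ((A' t * (A t)⁻¹).mulVec (m t)) (Ico (0:ℝ) 1) t)
    (hm0 : m 0 = x₀) :
    ∀ t ∈ Ico (0:ℝ) 1, m t = (A t).mulVec x₀ := by
  intro t ht
  obtain ⟨ht0, ht1⟩ := ht
  set F : ℝ → Matrix (Fin d) (Fin d) ℝ := fun s => A' s * (A s)⁻¹ with hF
  -- clamp into [0, t]
  set c : ℝ → ℝ := fun s => max 0 (min s t) with hc
  have hc_mem : ∀ s, c s ∈ Icc (0:ℝ) t := fun s =>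
    ⟨le_max_left _ _, max_le (by positivity) (min_le_right _ _)⟩
  have hIccsub : Icc (0:ℝ) t ⊆ Ico (0:ℝ) 1 := fun s hs => ⟨hs.1, lt_of_le_of_lt hs.2 ht1⟩
  have hc_eq : ∀ s ∈ Ico (0:ℝ) t, c s = s := by
    intro s hs
    simp [hc, min_eq_left hs.2.le, max_eq_right hs.1]
  -- total absolute sum bound
  have hBcont : ContinuousOn (fun s => ∑ i, ∑ j, |F s i j|) (Icc (0:ℝ) t) := by
    apply continuousOn_finset_sum; intro i _
    apply continuousOn_finset_sum; intro j _
    exact (((continuous_apply j).comp (continuous_apply i)).comp_continuousOn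
      (hFcont.mono hIccsub)).abs
  obtain ⟨C, hC⟩ := isCompact_Icc.exists_bound_of_continuousOn hBcont
  have hC0 : (0:ℝ) ≤ C := by
    have := hC 0 ⟨le_rfl, ht0⟩
    exact le_trans (norm_nonneg _) this
  -- vector field
  set v : ℝ → (Fin d → ℝ) → (Fin d → ℝ) := fun s x => (F (c s)).mulVec x with hv
  have hnorm : ∀ s, ∀ w : Fin d → ℝ, ‖(F (c s)).mulVec w‖ ≤ C * ‖w‖ := by
      intro s w
      apply pi_norm_le_iff_of_nonneg (by positivity) |>.2
      intro i
      calc ‖(F (c s)).mulVec w i‖ = |∑ j, F (c s) i j * w j| := by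
            simp [Matrix.mulVec, dotProduct]
        _ ≤ ∑ j, |F (c s) i j * w j| := Finset.abs_sum_le_sum_abs _ _
        _ ≤ ∑ j, |F (c s) i j| * ‖w‖ := by
            apply Finset.sum_le_sum; intro j _
            rw [abs_mul]
            exact mul_le_mul_of_nonneg_left (norm_le_pi_norm w j) (abs_nonneg _)
        _ = (∑ j, |F (c s) i j|) * ‖w‖ := by rw [← Finset.sum_mul]
        _ ≤ (∑ i, ∑ j, |F (c s) i j|) * ‖w‖ := by
            apply mul_le_mul_of_nonneg_right _ (norm_nonneg _)
            exact Finset.single_le_sum (f := fun i => ∑ j, |F (c s) i j|)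
              (fun i _ => Finset.sum_nonneg fun j _ => abs_nonneg _) (Finset.mem_univ i)
        _ ≤ C * ‖w‖ := by
            apply mul_le_mul_of_nonneg_right _ (norm_nonneg _)
            exact le_trans (le_abs_self _) (hC _ (hc_mem s))
  have hlip : ∀ s, LipschitzOnWith C.toNNReal (v s) univ := by
    intro s
    apply LipschitzWith.lipschitzOnWith
    apply LipschitzWith.of_dist_le_mul
    intro x y
    rw [dist_eq_norm, dist_eq_norm, hv, Real.coe_toNNReal C hC0]
    simp only
    rw [← Matrix.mulVec_sub]
    exact hnorm s (x - y)
  -- continuity / membership of Ico 0 1 within Ici s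
  have hmem_nhds : ∀ s ∈ Ico (0:ℝ) t, Ico (0:ℝ) 1 ∈ nhdsWithin s (Ici s) := by
    intro s hs
    apply mem_nhdsWithin.2
    refine ⟨Iio 1, isOpen_Iio, lt_of_lt_of_le hs.2 ht1.le, ?_⟩
    rintro x ⟨hx1, hx2⟩
    exact ⟨le_trans hs.1 hx2, hx1⟩
  -- the candidate solution
  set g : ℝ → Fin d → ℝ := fun s => (A s).mulVec x₀ with hg
  have hginv : ∀ s ∈ Ico (0:ℝ) 1, (A s)⁻¹ * A s = 1 := by
    intro s hs
    exact Matrix.nonsing_inv_mul _ ((Matrix.isUnit_iff_isUnit_det _).1 (hAinv s hs))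
  have hgderiv : ∀ s ∈ Ico (0:ℝ) 1,
      HasDerivWithinAt g ((A' s).mulVec x₀) (Ico (0:ℝ) 1) s := by
    intro s hs
    rw [hasDerivWithinAt_pi]
    intro i
    have : ∀ u, g u i = ∑ j, A u i j * x₀ j := by
      intro u; simp [hg, Matrix.mulVec, dotProduct]
    simp only [hg]
    have h2 : ((A' s).mulVec x₀) i = ∑ j, A' s i j * x₀ j := by
      simp [Matrix.mulVec, dotProduct]
    rw [h2]
    have := HasDerivWithinAt.sum (u := Finset.univ)
      (fun j _ => ((hA s hs i j).mul_const (x₀ j)))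
    convert this using 1
    exact funext fun u => by simp [Finset.sum_apply, Matrix.mulVec, dotProduct]
  have hgv : ∀ s ∈ Ico (0:ℝ) 1, (A' s).mulVec x₀ = (F s).mulVec (g s) := by
    intro s hs
    rw [hg]
    simp only
    rw [Matrix.mulVec_mulVec, hF]
    simp only
    rw [Matrix.mul_assoc, hginv s hs, Matrix.mul_one]
  -- apply uniqueness
  have key : EqOn m g (Icc 0 t) := by
    apply ODE_solution_unique_of_mem_Icc_right (v := v) (s := fun _ => univ)
      (K := C.toNNReal) (fun s _ => hlip s)
    · intro s hs
      exact ((hm s (hIccsub hs)).continuousWithinAt).mono hIccsub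
    · intro s hs
      have h1 := (hm s (hIccsub (Ico_subset_Icc_self hs))).mono_of_mem_nhdsWithin
        (hmem_nhds s hs)
      rw [hv]; simp only
      rw [hc_eq s hs]
      exact h1
    · intro s _; trivial
    · intro s hs
      exact ((hgderiv s (hIccsub hs)).continuousWithinAt).mono hIccsub
    · intro s hs
      have h1 := (hgderiv s (hIccsub (Ico_subset_Icc_self hs))).mono_of_mem_nhdsWithin
        (hmem_nhds s hs)
      rw [hv]; simp only
      rw [hc_eq s hs, ← hgv s (hIccsub (Ico_subset_Icc_self hs))]
      exact h1
    · intro s _; trivial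
    · rw [hg]; simp [hA0, hm0, Matrix.one_mulVec]
  exact key ⟨ht0, le_rfl⟩
end

section
/- Let d ≥ 1 and let A : ℝ → Matrix (Fin d) (Fin d) ℝ be differentiable on [0,1) with A(0) = I and A(t) invertible for every t ∈ [0,1), and let b : ℝ → ℝᵈ be differentiable on [0,1) with b(0) = 0. Define F(t) := A'(t) · A(t)⁻¹ and f(t) := b'(t) − F(t) ·ᵥ b(t), and assume F and f are continuous on [0,1). Fix x₀ ∈ ℝᵈ. If m : ℝ → ℝᵈ satisfies m'(t) = F(t) ·ᵥ m(t) + f(t) for all t ∈ [0,1) with m(0) = x₀, then m(t) = A(t) ·ᵥ x₀ + b(t) for all t ∈ [0,1). -/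
open Matrix Set

/-- Affine mean matching: with drift `F = A' A⁻¹` and affine term
`f = b' − F b`, the solution of `m' = F m + f`, `m 0 = x₀`, is `m t = A t ·ᵥ x₀ + b t`
on `[0,1)`. -/
theorem affine_mean_matching
    (d : ℕ) (hd : 1 ≤ d)
    (A A' : ℝ → Matrix (Fin d) (Fin d) ℝ)
    (hA : ∀ t ∈ Ico (0:ℝ) 1, ∀ i j,
      HasDerivWithinAt (fun s => A s i j) (A' t i j) (Ico (0:ℝ) 1) t)
    (hA0 : A 0 = 1)
    (hAinv : ∀ t ∈ Ico (0:ℝ) 1, IsUnit (A t))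
    (b b' : ℝ → Fin d → ℝ)
    (hb : ∀ t ∈ Ico (0:ℝ) 1, HasDerivWithinAt b (b' t) (Ico (0:ℝ) 1) t)
    (hb0 : b 0 = 0)
    (hFcont : ContinuousOn (fun t => A' t * (A t)⁻¹) (Ico (0:ℝ) 1))
    (hfcont : ContinuousOn
      (fun t => b' t - (A' t * (A t)⁻¹).mulVec (b t)) (Ico (0:ℝ) 1))
    (x₀ : Fin d → ℝ) (m : ℝ → Fin d → ℝ)
    (hm : ∀ t ∈ Ico (0:ℝ) 1,
      HasDerivWithinAt m
        ((A' t * (A t)⁻¹).mulVec (m t) + (b' t - (A' t * (A t)⁻¹).mulVec (b t)))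
        (Ico (0:ℝ) 1) t)
    (hm0 : m 0 = x₀) :
    ∀ t ∈ Ico (0:ℝ) 1, m t = (A t).mulVec x₀ + b t := by
  intro t₁ ht₁
  obtain ⟨ht₁0, ht₁1⟩ := ht₁
  set F : ℝ → Matrix (Fin d) (Fin d) ℝ := fun t => A' t * (A t)⁻¹ with hF
  set f : ℝ → Fin d → ℝ := fun t => b' t - (F t).mulVec (b t) with hfdef
  set y : ℝ → Fin d → ℝ := fun t => (A t).mulVec x₀ + b t with hy
  have hsub : Icc (0:ℝ) t₁ ⊆ Ico (0:ℝ) 1 :=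
    fun s hs => ⟨hs.1, lt_of_le_of_lt hs.2 ht₁1⟩
  -- clamp to [0, t₁]
  set c : ℝ → ℝ := fun s => max 0 (min s t₁) with hc
  have hc_mem : ∀ s, c s ∈ Icc (0:ℝ) t₁ := by
    intro s
    constructor
    · exact le_max_left _ _
    · exact max_le ht₁0 (min_le_right _ _)
  have hc_eq : ∀ s ∈ Icc (0:ℝ) t₁, c s = s := by
    intro s hs
    simp [hc, min_eq_left hs.2, max_eq_right hs.1]
  -- the vector field
  set v : ℝ → (Fin d → ℝ) → (Fin d → ℝ) :=
    fun s x => (F (c s)).mulVec x + f (c s) with hv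
  -- operator norm bound for F on the compact interval
  set Φ : Matrix (Fin d) (Fin d) ℝ →ₗ[ℝ]
      ((Fin d → ℝ) →L[ℝ] (Fin d → ℝ)) :=
    (LinearMap.toContinuousLinearMap.toLinearMap).comp
      ((Matrix.toLin' : Matrix (Fin d) (Fin d) ℝ ≃ₗ[ℝ] _).toLinearMap) with hΦ
  have hΦcont : Continuous Φ := Φ.continuous_of_finiteDimensional
  have hNcont : ContinuousOn (fun s => ‖Φ (F s)‖) (Icc (0:ℝ) t₁) :=
    (hΦcont.comp_continuousOn (hFcont.mono hsub)).norm
  obtain ⟨C, hC⟩ := (isCompact_Icc).exists_bound_of_continuousOn hNcont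
  set K : NNReal := Real.toNNReal C with hK
  have hΦapp : ∀ M : Matrix (Fin d) (Fin d) ℝ, ∀ x, Φ M x = M.mulVec x := by
    intro M x
    simp [hΦ, Matrix.toLin'_apply]
  have hvlip : ∀ s, LipschitzOnWith K (v s) univ := by
    intro s
    apply LipschitzOnWith.of_dist_le_mul
    intro x _ z _
    have h1 : v s x - v s z = (F (c s)).mulVec (x - z) := by
      simp only [hv, Matrix.mulVec_sub]
      abel
    calc dist (v s x) (v s z) = ‖v s x - v s z‖ := dist_eq_norm _ _
      _ = ‖Φ (F (c s)) (x - z)‖ := by rw [h1, hΦapp]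
      _ ≤ ‖Φ (F (c s))‖ * ‖x - z‖ := (Φ (F (c s))).le_opNorm _
      _ ≤ (K : ℝ) * ‖x - z‖ := by
          apply mul_le_mul_of_nonneg_right _ (norm_nonneg _)
          exact le_trans (by simpa using hC _ (hc_mem s)) (Real.le_coe_toNNReal C)
      _ = (K : ℝ) * dist x z := by rw [dist_eq_norm]
  -- derivative of y
  have hy' : ∀ s ∈ Ico (0:ℝ) 1,
      HasDerivWithinAt y ((A' s).mulVec x₀ + b' s) (Ico (0:ℝ) 1) s := by
    intro s hs
    apply HasDerivWithinAt.add _ (hb s hs)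
    rw [hasDerivWithinAt_pi]
    intro i
    have : HasDerivWithinAt (fun u => ∑ j, A u i j * x₀ j)
        (∑ j, A' s i j * x₀ j) (Ico (0:ℝ) 1) s :=
      HasDerivWithinAt.fun_sum fun j _ => (hA s hs i j).mul_const (x₀ j)
    simpa [Matrix.mulVec, dotProduct] using this
  -- the ODE identity for y
  have hyv : ∀ s ∈ Ico (0:ℝ) 1,
      (F s).mulVec (y s) + f s = (A' s).mulVec x₀ + b' s := by
    intro s hs
    have hFA : F s * A s = A' s := by
      rw [hF, Matrix.mul_assoc,
        Matrix.nonsing_inv_mul _ ((Matrix.isUnit_iff_isUnit_det _).mp (hAinv s hs)),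
        Matrix.mul_one]
    simp only [hy, hfdef, Matrix.mulVec_add, Matrix.mulVec_mulVec, hFA]
    abel
  -- uniqueness of ODE solutions on [0, t₁]
  have key : EqOn m y (Icc (0:ℝ) t₁) := by
    apply ODE_solution_unique_of_mem_Icc_right (v := v) (s := fun _ => univ) (fun s _ => hvlip s)
    · exact fun s hs => ((hm s (hsub hs)).continuousWithinAt).mono hsub
    · intro s hs
      have hs' : s ∈ Ico (0:ℝ) 1 := ⟨hs.1, lt_of_le_of_lt (le_of_lt hs.2) ht₁1⟩
      have hmem : Ico (0:ℝ) 1 ∈ nhdsWithin s (Ici s) :=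
        Filter.mem_of_superset (Ico_mem_nhdsGE_of_mem ⟨le_refl s, hs'.2⟩)
          (Ico_subset_Ico hs'.1 le_rfl)
      have := (hm s hs').mono_of_mem_nhdsWithin hmem
      have hcs : c s = s := hc_eq s ⟨hs.1, le_of_lt hs.2⟩
      simpa [hv, hcs] using this
    · exact fun s _ => mem_univ _
    · exact fun s hs => ((hy' s (hsub hs)).continuousWithinAt).mono hsub
    · intro s hs
      have hs' : s ∈ Ico (0:ℝ) 1 := ⟨hs.1, lt_of_le_of_lt (le_of_lt hs.2) ht₁1⟩
      have hmem : Ico (0:ℝ) 1 ∈ nhdsWithin s (Ici s) :=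
        Filter.mem_of_superset (Ico_mem_nhdsGE_of_mem ⟨le_refl s, hs'.2⟩)
          (Ico_subset_Ico hs'.1 le_rfl)
      have := (hy' s hs').mono_of_mem_nhdsWithin hmem
      have hcs : c s = s := hc_eq s ⟨hs.1, le_of_lt hs.2⟩
      rw [show v s (y s) = (A' s).mulVec x₀ + b' s by
        simp only [hv, hcs]; exact hyv s hs']
      exact this
    · exact fun s _ => mem_univ _
    · simp [hm0, hy, hA0, hb0, Matrix.one_mulVec]
  exact key (right_mem_Icc.mpr ht₁0)
end
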